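/- Let L be an integral lattice, Δ ⊆ L a set of elements of square -2, and Γ_Δ the group generated by the reflections in elements of Δ. Suppose α, α* ∈ L have square -2, α - α* lies in the radical of L, and there exists δ ∈ Δ with α*·δ = 1. Then α·δ = 1 and γ_δ(γ_α(δ)) = α; in particular, if α* is Γ_Δ-conjugate to elements of Δ and δ ∈ Δ, then α is Γ_{Δ∪{α}}-conjugate to δ. -/

import Mathlib

/-- The reflection in β as a linear map: x ↦ x + (B x β) • β. -/
noncomputable def reflLM {L : Type*} [AddCommGroup L] [Module ℤ L]
    (B : L →ₗ[ℤ] L →ₗ[ℤ] ℤ) (β : L) : L →ₗ[ℤ] L :=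
  LinearMap.id + @LinearMap.smulRight ℤ ℤ L L _ _ _ _ _ _ _ ‹_› (@IsScalarTower.mk ℤ ℤ L _ Module.toDistribMulAction.toDistribSMul.toSMul Module.toDistribMulAction.toDistribSMul.toSMul fun a b c => @mul_smul ℤ L _ Module.toDistribMulAction.toMulAction.toSemigroupAction a b c) (B.flip β) β

lemma reflLM_apply {L : Type*} [AddCommGroup L] [Module ℤ L]
    (B : L →ₗ[ℤ] L →ₗ[ℤ] ℤ) (β x : L) : reflLM B β x = x + B x β • β := by
  simp [reflLM]
  rw [← Int.cast_smul_eq_zsmul ℤ, Int.cast_id]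

lemma reflLM_involutive {L : Type*} [AddCommGroup L] [Module ℤ L]
    (B : L →ₗ[ℤ] L →ₗ[ℤ] ℤ) (β : L) (hβ : B β β = -2) :
    Function.Involutive (reflLM B β) := by
  intro x
  simp only [reflLM_apply]
  simp only [← Int.cast_smul_eq_zsmul ℤ, Int.cast_id]
  simp only [map_add, LinearMap.add_apply, map_smul, LinearMap.smul_apply, smul_eq_mul, hβ]
  module

/-- The reflection in β as a linear equivalence. -/
noncomputable def reflLE {L : Type*} [AddCommGroup L] [Module ℤ L]
    (B : L →ₗ[ℤ] L →ₗ[ℤ] ℤ) (β : L) (hβ : B β β = -2) : L ≃ₗ[ℤ] L :=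
  LinearEquiv.ofInvolutive (reflLM B β) (reflLM_involutive B β hβ)

lemma reflLE_apply {L : Type*} [AddCommGroup L] [Module ℤ L]
    (B : L →ₗ[ℤ] L →ₗ[ℤ] ℤ) (β : L) (hβ : B β β = -2) (x : L) :
    reflLE B β hβ x = x + B x β • β := reflLM_apply B β x

/-- If α, α* have square -2, α - α* is radical, and δ ∈ Δ with α*·δ = 1, then
α·δ = 1 and γ_δ(γ_α(δ)) = α; in particular α is conjugate to δ under the group
generated by reflections in Δ ∪ {α}. -/
theorem conjugation_via_radical
    (L : Type*) [AddCommGroup L] [Module ℤ L] [Module.Free ℤ L] [Module.Finite ℤ L]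
    (B : L →ₗ[ℤ] L →ₗ[ℤ] ℤ) (hsym : ∀ x y, B x y = B y x)
    (Δ : Set L) (hΔ : ∀ δ ∈ Δ, B δ δ = -2)
    (α αs δ : L) (hα : B α α = -2) (hαs : B αs αs = -2)
    (hrad : ∀ x : L, B (α - αs) x = 0)
    (hδ : δ ∈ Δ) (h1 : B αs δ = 1) :
    B α δ = 1 ∧
    (δ + B δ α • α) + B (δ + B δ α • α) δ • δ = α ∧
    ∃ g ∈ Subgroup.closure
        {r : L ≃ₗ[ℤ] L | ∃ β ∈ Δ ∪ {α}, ∀ x, r x = x + B x β • β},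
      g δ = α := by
  have hαδ : B α δ = 1 := by
    have h := hrad δ
    rw [map_sub, LinearMap.sub_apply, h1] at h
    omega
  have hδα : B δ α = 1 := by rw [hsym]; exact hαδ
  have hδδ : B δ δ = -2 := hΔ δ hδ
  have key : (δ + B δ α • α) + B (δ + B δ α • α) δ • δ = α := by
    simp only [← Int.cast_smul_eq_zsmul ℤ, Int.cast_id]
    rw [hδα, @one_smul ℤ L _ Module.toDistribMulAction.toMulAction, map_add, LinearMap.add_apply, hδδ, hαδ]
    module
  refine ⟨hαδ, key, reflLE B δ hδδ * reflLE B α hα, ?_, ?_⟩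
  · exact Subgroup.mul_mem _
      (Subgroup.subset_closure ⟨δ, Or.inl hδ, fun x => reflLM_apply B δ x⟩)
      (Subgroup.subset_closure ⟨α, Or.inr rfl, fun x => reflLM_apply B α x⟩)
  · show reflLE B δ hδδ (reflLE B α hα δ) = α
    rw [reflLE_apply, reflLE_apply]
    exact key
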